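/- Let g and ḡ be curves on a matrix Lie group satisfying ġ = X_t(g) and d/dt ḡ = X_t(ḡ), where X_t is group-affine: X_t(hg) = h X_t(g) + X_t(h) g − h X_t(e) g for all g, h. Then the left-invariant error f = g⁻¹ḡ satisfies ḟ = X_t(f) − X_t(e) f. -/

import Mathlib

open Matrix

attribute [local instance] Matrix.linftyOpNormedRing Matrix.linftyOpNormedAlgebra

/-- If `X_t` is group-affine and `ġ = X_t(g)`, `d/dt ḡ = X_t(ḡ)`, then the
left-invariant error `f = g⁻¹ ḡ` satisfies `ḟ = X_t(f) − X_t(e) f`. -/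
theorem left_error_of_group_affine (n : ℕ) (G : Set (Matrix (Fin n) (Fin n) ℝ))
    (hone : (1 : Matrix (Fin n) (Fin n) ℝ) ∈ G)
    (hmul : ∀ a ∈ G, ∀ b ∈ G, a * b ∈ G)
    (hinv : ∀ a ∈ G, a⁻¹ ∈ G)
    (X : ℝ → Matrix (Fin n) (Fin n) ℝ → Matrix (Fin n) (Fin n) ℝ)
    (hGA : ∀ t, ∀ g ∈ G, ∀ h ∈ G,
      X t (h * g) = h * X t g + X t h * g - h * X t 1 * g)
    (g gbar : ℝ → Matrix (Fin n) (Fin n) ℝ)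
    (hgG : ∀ t, g t ∈ G) (hgbarG : ∀ t, gbar t ∈ G)
    (hunit : ∀ t, IsUnit (g t))
    (hdg : ∀ t, HasDerivAt g (X t (g t)) t)
    (hdgbar : ∀ t, HasDerivAt gbar (X t (gbar t)) t) :
    ∀ t, HasDerivAt (fun s => (g s)⁻¹ * gbar s)
      (X t ((g t)⁻¹ * gbar t) - X t 1 * ((g t)⁻¹ * gbar t)) t := by
  intro t
  set u := (hunit t).unit with hu
  have hcoe : (↑u : Matrix (Fin n) (Fin n) ℝ) = g t := (hunit t).unit_spec
  have huinv : (↑u⁻¹ : Matrix (Fin n) (Fin n) ℝ) = (g t)⁻¹ := by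
    rw [Matrix.coe_units_inv, hcoe]
  have hinvdiff : HasDerivAt (fun s => (g s)⁻¹)
      (-((g t)⁻¹ * X t (g t) * (g t)⁻¹)) t := by
    have h1 : HasFDerivAt Ring.inverse
        (-ContinuousLinearMap.mulLeftRight ℝ _ ↑u⁻¹ ↑u⁻¹) (g t) := by
      simpa [hcoe] using hasFDerivAt_ringInverse (𝕜 := ℝ) u
    have h2 := h1.comp_hasDerivAt t (hdg t)
    simp only [Function.comp_def, ← Matrix.nonsing_inv_eq_ringInverse] at h2
    simp [huinv, ContinuousLinearMap.mulLeftRight_apply, mul_assoc] at h2 ⊢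
    exact h2
  have hprod := hinvdiff.mul (hdgbar t)
  convert hprod using 1
  case e'_4 => rfl
  case e'_5 => rfl
  case e'_6 => rfl
  case e'_8 => rfl
  have hfG : (g t)⁻¹ * gbar t ∈ G :=
    hmul _ (hinv _ (hgG t)) _ (hgbarG t)
  have key := hGA t ((g t)⁻¹ * gbar t) hfG (g t) (hgG t)
  have hgf : g t * ((g t)⁻¹ * gbar t) = gbar t := by
    rw [← mul_assoc, Matrix.mul_nonsing_inv _ ((Matrix.isUnit_iff_isUnit_det _).mp (hunit t)), one_mul]
  rw [hgf] at key
  have hginv : (g t)⁻¹ * g t = 1 :=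
    Matrix.nonsing_inv_mul _ ((Matrix.isUnit_iff_isUnit_det _).mp (hunit t))
  rw [key]
  set f := (g t)⁻¹ * gbar t
  have : gbar t = g t * f := hgf.symm
  rw [this]
  have e1 : ∀ a : Matrix (Fin n) (Fin n) ℝ, a * (g t)⁻¹ * g t = a := fun a => by
    rw [mul_assoc, hginv, mul_one]
  simp only [mul_add, mul_sub, neg_mul, ← mul_assoc, hginv, e1, one_mul]
  abel
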